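/- Suppose v_i ≥ u_{i+1} for all i ∈ [n−1]. Then the poset P_𝓛 is pure if and only if both of the following hold: (a) for every i ∈ [n−1] with ε_i > 1, one has i + ε_i − 1 ≤ n, ε_j = 1 for every j with i < j < i + ε_i − 1, and either i + ε_i − 1 = n or ε_{i+ε_i−1} > 1; (b) for every i ∈ [n−1] with θ_i > 1, one has i − θ_i + 1 ≥ 0, θ_j = 1 for every j with i − θ_i + 1 < j < i, and either i − θ_i + 1 = 0 or θ_{i−θ_i+1} > 1. -/

import Mathlib

namespace LadderPaper

/-- The tuple `a_{i,j}`: entry `t` is `u t` for `t < i` and `max (j + (t - i)) (u t)` for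
`t ≥ i` (indices `t ∈ [1,n]`; entries outside `[1,n]` are set to `0`). -/
def atuple (u : ℕ → ℤ) (n i : ℕ) (j : ℤ) : ℕ → ℤ := fun t =>
  if 1 ≤ t ∧ t ≤ n then
    (if t < i then u t else max (j + ((t : ℤ) - (i : ℤ))) (u t))
  else 0

/-- The tuple `b_{i,j}`: like `a_{i,j}` but with `i`-th entry `j - 1`. -/
def btuple (u : ℕ → ℤ) (n i : ℕ) (j : ℤ) : ℕ → ℤ := fun t =>
  if 1 ≤ t ∧ t ≤ n then
    (if t < i then u t
     else if t = i then j - 1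
     else max (j + ((t : ℤ) - (i : ℤ))) (u t))
  else 0

/-- The tuple `(u_1, …, u_n)`. -/
def utuple (u : ℕ → ℤ) (n : ℕ) : ℕ → ℤ := fun t =>
  if 1 ≤ t ∧ t ≤ n then u t else 0

/-- The lattice `𝓛` of tuples `c` with `u t ≤ c t ≤ v t` for `t ∈ [1,n]`, strictly
increasing entries, and (normalization) `c t = 0` outside `[1,n]`.  It carries the
componentwise (induced product) order. -/
def ladderL (n : ℕ) (u v : ℕ → ℤ) : Set (ℕ → ℤ) :=
  {c | (∀ t, 1 ≤ t → t ≤ n → u t ≤ c t ∧ c t ≤ v t) ∧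
       (∀ t, 1 ≤ t → t + 1 ≤ n → c t < c (t + 1)) ∧
       (∀ t, t = 0 ∨ n < t → c t = 0)}

/-- The set `P_𝓛 = { a_{i,j} : i ∈ [n], j ∈ [u_i + 1, v_i] }`. -/
def PL (n : ℕ) (u v : ℕ → ℤ) : Set (ℕ → ℤ) :=
  {x | ∃ i : ℕ, ∃ j : ℤ, 1 ≤ i ∧ i ≤ n ∧ u i + 1 ≤ j ∧ j ≤ v i ∧ x = atuple u n i j}

/-- The product poset `𝓛 × [r]`. -/
def ladderLr (n : ℕ) (u v : ℕ → ℤ) (r : ℤ) : Set ((ℕ → ℤ) × ℤ) :=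
  {p | p.1 ∈ ladderL n u v ∧ 1 ≤ p.2 ∧ p.2 ≤ r}

/-- The set `P_{𝓛×[r]} = { (a_{i,j}, 1) } ∪ { ((u_1,…,u_n), k) : k ∈ [2,r] }`. -/
def PLr (n : ℕ) (u v : ℕ → ℤ) (r : ℤ) : Set ((ℕ → ℤ) × ℤ) :=
  {p | (p.1 ∈ PL n u v ∧ p.2 = 1) ∨ (p.1 = utuple u n ∧ 2 ≤ p.2 ∧ p.2 ≤ r)}

/-- `ε_i > 1`, with the convention `ε_n > 1` (i.e. `i = n` or `u_{i+1} - u_i > 1`). -/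
def epsGt1 (u : ℕ → ℤ) (n i : ℕ) : Prop := i = n ∨ 1 < u (i + 1) - u i

/-- `θ_{i-1} > 1`, with the convention `θ_0 > 1` (i.e. `i = 1` or `v_i - v_{i-1} > 1`). -/
def thetaGt1 (v : ℕ → ℤ) (i : ℕ) : Prop := i = 1 ∨ 1 < v i - v (i - 1)

/-- Membership in `C = { i ∈ [n-1] : v_i < u_{i+1} } ∪ { n }`. -/
def inC (n : ℕ) (u v : ℕ → ℤ) (i : ℕ) : Prop :=
  (1 ≤ i ∧ i + 1 ≤ n ∧ v i < u (i + 1)) ∨ i = n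

/-- The set `C = { i ∈ [n-1] : v_i < u_{i+1} } ∪ { n }`. -/
def Cset (n : ℕ) (u v : ℕ → ℤ) : Set ℕ :=
  {i | 1 ≤ i ∧ i + 1 ≤ n ∧ v i < u (i + 1)} ∪ {n}

/-- `[p,q]` is one of the blocks `[p_s, q_s]` determined by `C`: `q ∈ C`,
no element of `C` lies in `[p, q-1]`, and either `p = 1` or `p - 1 ∈ C`. -/
def IsBlock (n : ℕ) (u v : ℕ → ℤ) (p q : ℕ) : Prop :=
  1 ≤ p ∧ p ≤ q ∧ q ≤ n ∧ inC n u v q ∧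
    (∀ j, p ≤ j → j < q → ¬ inC n u v j) ∧ (p = 1 ∨ inC n u v (p - 1))

/-- `i0 = min { i ∈ [p,q] : ε_i > 1 }` (with the convention `ε_n > 1`). -/
def IsBlockMin (n : ℕ) (u : ℕ → ℤ) (p q i0 : ℕ) : Prop :=
  p ≤ i0 ∧ i0 ≤ q ∧ epsGt1 u n i0 ∧ ∀ j, p ≤ j → j < i0 → ¬ epsGt1 u n j

/-- The comparability graph of a poset: two distinct elements are adjacent
iff they are comparable. -/
def compGraph (α : Type*) [Preorder α] : SimpleGraph α where
  Adj x y := x ≠ y ∧ (x ≤ y ∨ y ≤ x)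
  symm := ⟨fun x y h => ⟨Ne.symm h.1, Or.symm h.2⟩⟩
  loopless := ⟨fun x h => h.1 rfl⟩

/-- A poset is pure if all of its maximal chains have the same cardinality
(equivalently, the same length). -/
def IsPure (α : Type*) [Preorder α] : Prop :=
  ∀ A B : Set α, IsMaxChain (· ≤ ·) A → IsMaxChain (· ≤ ·) B → A.ncard = B.ncard

section Aux

variable {n : ℕ} {u v : ℕ → ℤ}

lemma atuple_eval_lt {i t : ℕ} {j : ℤ} (h1 : 1 ≤ t) (h2 : t ≤ n) (ht : t < i) :
    atuple u n i j t = u t := by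
  simp [atuple, h1, h2, ht]

lemma atuple_eval_ge {i t : ℕ} {j : ℤ} (h1 : 1 ≤ t) (h2 : t ≤ n) (ht : i ≤ t) :
    atuple u n i j t = max (j + ((t : ℤ) - (i : ℤ))) (u t) := by
  simp [atuple, h1, h2, Nat.not_lt.mpr ht]

lemma atuple_eval_out {i t : ℕ} {j : ℤ} (h : ¬ (1 ≤ t ∧ t ≤ n)) :
    atuple u n i j t = 0 := by
  simp [atuple, h]

lemma atuple_le_iff {i i' : ℕ} {j j' : ℤ}
    (hi : 1 ≤ i) (hin : i ≤ n) (hj : u i < j) :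
    atuple u n i j ≤ atuple u n i' j' ↔ i' ≤ i ∧ j - (i : ℤ) ≤ j' - (i' : ℤ) := by
  constructor
  · intro h
    have hself : atuple u n i j i = j := by
      rw [atuple_eval_ge hi hin le_rfl]
      simp [max_eq_left hj.le]
    have hii : i' ≤ i := by
      by_contra hlt
      push_neg at hlt
      have h2 := h i
      rw [hself, atuple_eval_lt hi hin hlt] at h2
      exact absurd h2 (not_le.mpr hj)
    refine ⟨hii, ?_⟩
    have h2 := h i
    rw [hself, atuple_eval_ge hi hin hii] at h2
    rcases le_max_iff.mp h2 with h3 | h3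
    · linarith
    · exact absurd h3 (not_le.mpr hj)
  · rintro ⟨hii, hd⟩
    intro t
    by_cases ht : 1 ≤ t ∧ t ≤ n
    · by_cases ht' : t < i'
      · rw [atuple_eval_lt ht.1 ht.2 ht', atuple_eval_lt ht.1 ht.2 (ht'.trans_le hii)]
      · push_neg at ht'
        rw [atuple_eval_ge ht.1 ht.2 ht']
        by_cases ht2 : t < i
        · rw [atuple_eval_lt ht.1 ht.2 ht2]
          exact le_max_right _ _
        · push_neg at ht2
          rw [atuple_eval_ge ht.1 ht.2 ht2]
          exact max_le_max (by linarith) le_rfl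
    · rw [atuple_eval_out ht, atuple_eval_out ht]

lemma atuple_inj {i i' : ℕ} {j j' : ℤ}
    (hi : 1 ≤ i) (hin : i ≤ n) (hj : u i < j)
    (hi' : 1 ≤ i') (hin' : i' ≤ n) (hj' : u i' < j')
    (h : atuple u n i j = atuple u n i' j') : i = i' ∧ j = j' := by
  have h1 := (atuple_le_iff hi hin hj).mp h.le
  have h2 := (atuple_le_iff hi' hin' hj').mp h.ge
  have : i = i' := le_antisymm h2.1 h1.1
  subst this
  exact ⟨rfl, by omega⟩

lemma mem_PL {x : ℕ → ℤ} : x ∈ PL n u v ↔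
    ∃ i : ℕ, ∃ j : ℤ, 1 ≤ i ∧ i ≤ n ∧ u i + 1 ≤ j ∧ j ≤ v i ∧ x = atuple u n i j :=
  Iff.rfl

noncomputable def pI (x : ↥(PL n u v)) : ℕ := (mem_PL.mp x.2).choose

noncomputable def pJ (x : ↥(PL n u v)) : ℤ := (mem_PL.mp x.2).choose_spec.choose

lemma p_spec (x : ↥(PL n u v)) :
    1 ≤ pI x ∧ pI x ≤ n ∧ u (pI x) + 1 ≤ pJ x ∧ pJ x ≤ v (pI x) ∧
      x.val = atuple u n (pI x) (pJ x) :=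
  (mem_PL.mp x.2).choose_spec.choose_spec

lemma rep_eq (x : ↥(PL n u v)) (i : ℕ) (j : ℤ)
    (hi : 1 ≤ i) (hin : i ≤ n) (hj : u i + 1 ≤ j)
    (hx : x.val = atuple u n i j) : pI x = i ∧ pJ x = j := by
  obtain ⟨h1, h2, h3, _, h5⟩ := p_spec x
  exact atuple_inj h1 h2 (by omega) hi hin (by omega) (h5.symm.trans hx)

lemma le_iff' (x y : ↥(PL n u v)) :
    x ≤ y ↔ pI y ≤ pI x ∧ pJ x - (pI x : ℤ) ≤ pJ y - (pI y : ℤ) := by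
  obtain ⟨h1, h2, h3, _, h5⟩ := p_spec x
  obtain ⟨g1, g2, g3, _, g5⟩ := p_spec y
  rw [← Subtype.coe_le_coe, h5, g5]
  exact atuple_le_iff h1 h2 (by omega)

lemma ext_iff' (x y : ↥(PL n u v)) : x = y ↔ pI x = pI y ∧ pJ x = pJ y := by
  constructor
  · rintro rfl; exact ⟨rfl, rfl⟩
  · rintro ⟨h1, h2⟩
    apply Subtype.ext
    rw [(p_spec x).2.2.2.2, (p_spec y).2.2.2.2, h1, h2]

noncomputable def rho (x : ↥(PL n u v)) : ℤ := pJ x - 2 * (pI x : ℤ)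

lemma rho_mono {x y : ↥(PL n u v)} (h : x < y) : rho x < rho y := by
  have h1 := (le_iff' x y).mp h.le
  have h2 : ¬ (pI x ≤ pI y ∧ pJ y - (pI y : ℤ) ≤ pJ x - (pI x : ℤ)) := by
    intro hc
    exact h.ne ((ext_iff' x y).mpr (by constructor <;> omega))
  unfold rho
  omega

lemma steps_mono {w : ℕ → ℤ} (hw : ∀ i, 1 ≤ i → i + 1 ≤ n → w i < w (i + 1)) :
    ∀ a b : ℕ, 1 ≤ a → a ≤ b → b ≤ n → w a - (a : ℤ) ≤ w b - (b : ℤ) := by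
  intro a b ha hab hbn
  induction b, hab using Nat.le_induction with
  | base => omega
  | succ b hab ih =>
    have h1 : w b < w (b + 1) := hw b (ha.trans hab) hbn
    have h2 := ih (by omega)
    push_cast at h2 ⊢
    omega

lemma telescope (w : ℕ → ℤ) :
    ∀ a b : ℕ, a ≤ b → (∀ j, a ≤ j → j < b → w (j + 1) - w j = 1) →
      w b - (b : ℤ) = w a - (a : ℤ) := by
  intro a b hab h
  induction b, hab using Nat.le_induction with
  | base => rfl
  | succ b hab ih =>
    have h1 := h b hab (by omega)
    have h2 := ih (fun j hj hj' => h j hj (by omega))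
    push_cast at h2 ⊢
    omega

end Aux

section Chains

variable {α : Type*} [PartialOrder α]

lemma maxChain_nonempty [Nonempty α] {A : Set α} (hA : IsMaxChain (· ≤ ·) A) :
    A.Nonempty := by
  by_contra h
  rw [Set.not_nonempty_iff_eq_empty] at h
  obtain ⟨x⟩ := ‹Nonempty α›
  have hch : IsChain (· ≤ ·) ({x} : Set α) := Set.subsingleton_singleton.isChain
  have := hA.2 hch (h ▸ Set.empty_subset _)
  rw [h] at this
  exact Set.singleton_ne_empty x this.symm

lemma least_minimal {A : Set α} (hA : IsMaxChain (· ≤ ·) A) {z : α}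
    (hz : ∀ a ∈ A, z ≤ a) : ∀ y, y ≤ z → y = z := by
  intro y hy
  by_contra hne
  have hch : IsChain (· ≤ ·) (insert y A) :=
    hA.1.insert fun d hd _ => Or.inl (hy.trans (hz d hd))
  have heq := hA.2 hch (Set.subset_insert y A)
  have hyA : y ∈ A := heq ▸ Set.mem_insert y A
  exact hne (le_antisymm hy (hz y hyA))

lemma greatest_maximal {A : Set α} (hA : IsMaxChain (· ≤ ·) A) {w : α}
    (hw : ∀ a ∈ A, a ≤ w) : ∀ y, w ≤ y → y = w := by
  intro y hy
  by_contra hne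
  have hch : IsChain (· ≤ ·) (insert y A) :=
    hA.1.insert fun d hd _ => Or.inr ((hw d hd).trans hy)
  have heq := hA.2 hch (Set.subset_insert y A)
  have hyA : y ∈ A := heq ▸ Set.mem_insert y A
  exact hne (le_antisymm (hw y hyA) hy)

lemma maxChain_exists_card [Finite α] (ρ : α → ℤ)
    (hmono : ∀ x y : α, x < y → ρ x < ρ y)
    (hins : ∀ x y : α, x < y → ρ x + 2 ≤ ρ y → ∃ c, x < c ∧ c < y)
    {A : Set α} (hA : IsMaxChain (· ≤ ·) A) (hne : A.Nonempty) :
    ∃ z ∈ A, ∃ w ∈ A, (∀ a ∈ A, z ≤ a) ∧ (∀ a ∈ A, a ≤ w) ∧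
      (A.ncard : ℤ) = ρ w - ρ z + 1 := by
  have hfin : A.Finite := Set.toFinite A
  have hchain := hA.1
  obtain ⟨z, hzA, hz⟩ := Set.exists_min_image A ρ hfin hne
  obtain ⟨w, hwA, hw⟩ := Set.exists_max_image A ρ hfin hne
  have least : ∀ a ∈ A, z ≤ a := by
    intro a ha
    rcases eq_or_ne a z with rfl | hne'
    · exact le_rfl
    rcases hchain hzA ha hne'.symm with h | h
    · exact h
    · rcases lt_or_eq_of_le h with h' | h'
      · exact absurd (hmono a z h') (not_lt.mpr (hz a ha))
      · exact h'.ge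
  have greatest : ∀ a ∈ A, a ≤ w := by
    intro a ha
    rcases eq_or_ne a w with rfl | hne'
    · exact le_rfl
    rcases hchain ha hwA hne' with h | h
    · exact h
    · rcases lt_or_eq_of_le h with h' | h'
      · exact absurd (hmono w a h') (not_lt.mpr (hw a ha))
      · exact h'.ge
  have hinj : Set.InjOn ρ A := by
    intro a ha b hb hab
    rcases eq_or_ne a b with h | h
    · exact h
    rcases hchain ha hb h with h' | h'
    · exact absurd (hmono a b (lt_of_le_of_ne h' h)) (by omega)
    · exact absurd (hmono b a (lt_of_le_of_ne h' h.symm)) (by omega)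
  have himg : ρ '' A = Set.Icc (ρ z) (ρ w) := by
    apply Set.Subset.antisymm
    · rintro r ⟨a, ha, rfl⟩
      exact ⟨hz a ha, hw a ha⟩
    · rintro r ⟨hr1, hr2⟩
      by_contra hrim
      have hrA : ∀ a ∈ A, ρ a ≠ r := by
        intro a ha hc
        exact hrim ⟨a, ha, hc⟩
      set Ar := {a ∈ A | ρ a ≤ r} with hArdef
      have hArne : Ar.Nonempty := ⟨z, hzA, hr1⟩
      obtain ⟨a, haAr, hamax⟩ := Set.exists_max_image Ar ρ (Set.toFinite _) hArne
      have haA : a ∈ A := haAr.1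
      have hastar : ∀ b ∈ Ar, b ≤ a := by
        intro b hb
        rcases eq_or_ne b a with rfl | hne'
        · exact le_rfl
        rcases hchain hb.1 haA hne' with h | h
        · exact h
        · rcases lt_or_eq_of_le h with h' | h'
          · exact absurd (hmono a b h') (not_lt.mpr (hamax b hb))
          · exact h'.ge
      have hra' : ρ a < r := lt_of_le_of_ne haAr.2 (hrA a haA)
      set Br := {b ∈ A | r < ρ b} with hBrdef
      have hwBr : w ∈ Br := by
        refine ⟨hwA, ?_⟩
        by_contra hc
        push_neg at hc
        have : w ∈ Ar := ⟨hwA, hc⟩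
        have := hamax w this
        omega
      obtain ⟨b, hbBr, hbmin⟩ := Set.exists_min_image Br ρ (Set.toFinite _) ⟨w, hwBr⟩
      have hbA : b ∈ A := hbBr.1
      have hbleast : ∀ c ∈ Br, b ≤ c := by
        intro c hc
        rcases eq_or_ne c b with rfl | hne'
        · exact le_rfl
        rcases hchain hbA hc.1 hne'.symm with h | h
        · exact h
        · rcases lt_or_eq_of_le h with h' | h'
          · exact absurd (hmono c b h') (not_lt.mpr (hbmin c hc))
          · exact h'.ge
      have hab : a < b := by
        have hne' : a ≠ b := by
          intro hc
          have := hbBr.2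
          rw [← hc] at this
          omega
        rcases hchain haA hbA hne' with h | h
        · exact lt_of_le_of_ne h hne'
        · have := hmono b a (lt_of_le_of_ne h hne'.symm)
          have := hbBr.2
          omega
      have hgap : ρ a + 2 ≤ ρ b := by
        have h1 := hbBr.2
        by_contra hg
        push_neg at hg
        omega
      obtain ⟨c, hac, hcb⟩ := hins a b hab hgap
      have hcA : c ∉ A := by
        intro hcA
        rcases le_or_gt (ρ c) r with h | h
        · exact absurd (hastar c ⟨hcA, h⟩) (not_le_of_gt hac)
        · exact absurd (hbleast c ⟨hcA, h⟩) (not_le_of_gt hcb)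
      have hch : IsChain (· ≤ ·) (insert c A) := by
        apply hchain.insert
        intro d hd _
        rcases le_or_gt (ρ d) r with h | h
        · exact Or.inr ((hastar d ⟨hd, h⟩).trans hac.le)
        · exact Or.inl (hcb.le.trans (hbleast d ⟨hd, h⟩))
      have heq := hA.2 hch (Set.subset_insert c A)
      exact hcA (heq ▸ Set.mem_insert c A)
  refine ⟨z, hzA, w, hwA, least, greatest, ?_⟩
  have h1 : A.ncard = (ρ '' A).ncard := (Set.ncard_image_of_injOn hinj).symm
  rw [himg, ← Finset.coe_Icc, Set.ncard_coe_finset, Int.card_Icc] at h1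
  have hzw : ρ z ≤ ρ w := hz w hwA
  rw [h1]
  rw [Int.toNat_of_nonneg (by omega)]
  ring

end Chains

section PLprops

variable {n : ℕ} {u v : ℕ → ℤ}

lemma PL_finite (humono : ∀ i, 1 ≤ i → i + 1 ≤ n → u i < u (i + 1))
    (hvmono : ∀ i, 1 ≤ i → i + 1 ≤ n → v i < v (i + 1)) :
    (PL n u v).Finite := by
  have hsub : PL n u v ⊆
      (fun p : ℕ × ℤ => atuple u n p.1 p.2) ''
        ((Set.Icc 1 n) ×ˢ (Set.Icc (u 1 + 1) (v n))) := by
    rintro x ⟨i, j, hi, hin, hj, hjv, rfl⟩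
    refine ⟨(i, j), ⟨⟨hi, hin⟩, ?_, ?_⟩, rfl⟩
    · have := steps_mono humono 1 i le_rfl hi hin
      push_cast at this
      omega
    · have := steps_mono hvmono i n hi hin le_rfl
      push_cast at this
      omega
  exact Set.Finite.subset (Set.Finite.image _ ((Set.finite_Icc 1 n).prod
    (Set.finite_Icc (u 1 + 1) (v n)))) hsub

lemma lt_iff' (x y : ↥(PL n u v)) :
    x < y ↔ (pI y ≤ pI x ∧ pJ x - (pI x : ℤ) ≤ pJ y - (pI y : ℤ)) ∧
      ¬(pI x ≤ pI y ∧ pJ y - (pI y : ℤ) ≤ pJ x - (pI x : ℤ)) := by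
  rw [lt_iff_le_not_ge, le_iff', le_iff']

lemma insert_between
    (humono : ∀ i, 1 ≤ i → i + 1 ≤ n → u i < u (i + 1))
    (hvmono : ∀ i, 1 ≤ i → i + 1 ≤ n → v i < v (i + 1))
    (x y : ↥(PL n u v)) (hxy : x < y) (hgap : rho x + 2 ≤ rho y) :
    ∃ c, x < c ∧ c < y := by
  obtain ⟨hx1, hx2, hx3, hx4, hx5⟩ := p_spec x
  obtain ⟨hy1, hy2, hy3, hy4, hy5⟩ := p_spec y
  obtain ⟨⟨hle1, hle2⟩, hnle⟩ := (lt_iff' x y).mp hxy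
  unfold rho at hgap
  by_cases hii : pI y = pI x
  · -- vertical step
    have hjj : pJ x + 2 ≤ pJ y := by omega
    have hmem : atuple u n (pI x) (pJ x + 1) ∈ PL n u v :=
      ⟨pI x, pJ x + 1, hx1, hx2, by omega, by rw [hii] at hy4; omega, rfl⟩
    set c : ↥(PL n u v) := ⟨_, hmem⟩ with hcdef
    have hrep := rep_eq c (pI x) (pJ x + 1) hx1 hx2 (by omega) rfl
    refine ⟨c, ?_, ?_⟩
    · rw [lt_iff', hrep.1, hrep.2]
      omega
    · rw [lt_iff', hrep.1, hrep.2]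
      omega
  · have hii' : pI y < pI x := lt_of_le_of_ne hle1 hii
    by_cases hd : pJ x - (pI x : ℤ) = pJ y - (pI y : ℤ)
    · -- horizontal step: pI x - pI y ≥ 2
      have hgap2 : pI y + 2 ≤ pI x := by omega
      have hUm := steps_mono humono (pI y + 1) (pI x) (by omega) (by omega) hx2
      have hVm := steps_mono hvmono (pI y) (pI y + 1) hy1 (by omega) (by omega)
      have hmem : atuple u n (pI y + 1) (pJ x - (pI x : ℤ) + ((pI y : ℤ) + 1)) ∈ PL n u v := by
        refine ⟨pI y + 1, _, by omega, by omega, ?_, ?_, rfl⟩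
        · push_cast at hUm ⊢
          omega
        · push_cast at hVm ⊢
          omega
      set c : ↥(PL n u v) := ⟨_, hmem⟩ with hcdef
      have hrep := rep_eq c (pI y + 1) (pJ x - (pI x : ℤ) + ((pI y : ℤ) + 1))
        (by omega) (by omega) (by push_cast at hUm ⊢; omega) rfl
      refine ⟨c, ?_, ?_⟩
      · rw [lt_iff', hrep.1, hrep.2]
        push_cast
        omega
      · rw [lt_iff', hrep.1, hrep.2]
        push_cast
        omega
    · -- diagonal-avoiding step at row pI y
      have hd' : pJ x - (pI x : ℤ) < pJ y - (pI y : ℤ) := lt_of_le_of_ne hle2 hd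
      have hUm := steps_mono humono (pI y) (pI x) hy1 (le_of_lt hii') hx2
      have hmem : atuple u n (pI y) (pJ x - (pI x : ℤ) + (pI y : ℤ)) ∈ PL n u v := by
        refine ⟨pI y, _, hy1, hy2, ?_, ?_, rfl⟩
        · omega
        · omega
      set c : ↥(PL n u v) := ⟨_, hmem⟩ with hcdef
      have hrep := rep_eq c (pI y) (pJ x - (pI x : ℤ) + (pI y : ℤ)) hy1 hy2 (by omega) rfl
      refine ⟨c, ?_, ?_⟩
      · rw [lt_iff', hrep.1, hrep.2]
        omega
      · rw [lt_iff', hrep.1, hrep.2]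
        omega

lemma min_char
    (humono : ∀ i, 1 ≤ i → i + 1 ≤ n → u i < u (i + 1))
    (huv : ∀ i, 1 ≤ i → i ≤ n → u i < v i)
    (z : ↥(PL n u v)) (hmin : ∀ y, y ≤ z → y = z) :
    pJ z = u (pI z) + 1 ∧ epsGt1 u n (pI z) := by
  obtain ⟨h1, h2, h3, h4, h5⟩ := p_spec z
  constructor
  · by_contra hne
    have hj : u (pI z) + 1 < pJ z := lt_of_le_of_ne h3 (Ne.symm hne)
    have hmem : atuple u n (pI z) (pJ z - 1) ∈ PL n u v :=
      ⟨pI z, pJ z - 1, h1, h2, by omega, by omega, rfl⟩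
    set y : ↥(PL n u v) := ⟨_, hmem⟩ with hydef
    have hrep := rep_eq y (pI z) (pJ z - 1) h1 h2 (by omega) rfl
    have hyz : y ≤ z := by
      rw [le_iff', hrep.1, hrep.2]
      omega
    have := hmin y hyz
    rw [this] at hrep
    omega
  · by_contra hE
    rw [epsGt1] at hE
    push_neg at hE
    have hlt : pI z + 1 ≤ n := by omega
    have hstep := humono (pI z) h1 hlt
    have heq : u (pI z + 1) = u (pI z) + 1 := by omega
    have hmem : atuple u n (pI z + 1) (u (pI z + 1) + 1) ∈ PL n u v :=
      ⟨pI z + 1, _, by omega, hlt, le_rfl, by have := huv (pI z + 1) (by omega) hlt; omega, rfl⟩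
    set y : ↥(PL n u v) := ⟨_, hmem⟩ with hydef
    have hrep := rep_eq y (pI z + 1) (u (pI z + 1) + 1) (by omega) hlt le_rfl rfl
    have hyz : y ≤ z := by
      rw [le_iff', hrep.1, hrep.2]
      push_cast
      omega
    have := hmin y hyz
    rw [this] at hrep
    omega

lemma max_char
    (hvmono : ∀ i, 1 ≤ i → i + 1 ≤ n → v i < v (i + 1))
    (huv : ∀ i, 1 ≤ i → i ≤ n → u i < v i)
    (w : ↥(PL n u v)) (hmax : ∀ y, w ≤ y → y = w) :
    pJ w = v (pI w) ∧ thetaGt1 v (pI w) := by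
  obtain ⟨h1, h2, h3, h4, h5⟩ := p_spec w
  constructor
  · by_contra hne
    have hj : pJ w < v (pI w) := lt_of_le_of_ne h4 hne
    have hmem : atuple u n (pI w) (pJ w + 1) ∈ PL n u v :=
      ⟨pI w, pJ w + 1, h1, h2, by omega, by omega, rfl⟩
    set y : ↥(PL n u v) := ⟨_, hmem⟩ with hydef
    have hrep := rep_eq y (pI w) (pJ w + 1) h1 h2 (by omega) rfl
    have hyz : w ≤ y := by
      rw [le_iff', hrep.1, hrep.2]
      omega
    have := hmax y hyz
    rw [this] at hrep
    omega
  · by_contra hT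
    rw [thetaGt1] at hT
    push_neg at hT
    have hq2 : 2 ≤ pI w := by omega
    have hq1' : pI w - 1 + 1 = pI w := by omega
    have hstep := hvmono (pI w - 1) (by omega) (by omega)
    rw [hq1'] at hstep
    have heq : v (pI w) = v (pI w - 1) + 1 := by omega
    have hmem : atuple u n (pI w - 1) (v (pI w - 1)) ∈ PL n u v :=
      ⟨pI w - 1, _, by omega, by omega,
        by have := huv (pI w - 1) (by omega) (by omega); omega, le_rfl, rfl⟩
    set y : ↥(PL n u v) := ⟨_, hmem⟩ with hydef
    have hrep := rep_eq y (pI w - 1) (v (pI w - 1)) (by omega) (by omega)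
      (by have := huv (pI w - 1) (by omega) (by omega); omega) rfl
    have hyz : w ≤ y := by
      rw [le_iff', hrep.1, hrep.2]
      constructor
      · omega
      · push_cast [hq2]
        omega
    have := hmax y hyz
    rw [this] at hrep
    omega

lemma min_of
    (humono : ∀ i, 1 ≤ i → i + 1 ≤ n → u i < u (i + 1))
    (z : ↥(PL n u v)) (h1 : pJ z = u (pI z) + 1) (h2 : epsGt1 u n (pI z)) :
    ∀ y, y ≤ z → y = z := by
  intro y hy
  obtain ⟨hy1, hy2, hy3, hy4, hy5⟩ := p_spec y
  obtain ⟨hz1, hz2, hz3, hz4, hz5⟩ := p_spec z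
  obtain ⟨hle1, hle2⟩ := (le_iff' y z).mp hy
  have hiy : pI y = pI z := by
    by_contra hne
    have hlt : pI z < pI y := lt_of_le_of_ne hle1 (Ne.symm hne)
    rcases h2 with hc | hc
    · omega
    · have hU2 := steps_mono humono (pI z + 1) (pI y) (by omega) (by omega) hy2
      have := humono (pI z) hz1 (by omega)
      push_cast at hU2
      omega
  rw [ext_iff', hiy]
  rw [hiy] at hy3 hle2
  omega

lemma max_of
    (hvmono : ∀ i, 1 ≤ i → i + 1 ≤ n → v i < v (i + 1))
    (w : ↥(PL n u v)) (h1 : pJ w = v (pI w)) (h2 : thetaGt1 v (pI w)) :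
    ∀ y, w ≤ y → y = w := by
  intro y hy
  obtain ⟨hy1, hy2, hy3, hy4, hy5⟩ := p_spec y
  obtain ⟨hz1, hz2, hz3, hz4, hz5⟩ := p_spec w
  obtain ⟨hle1, hle2⟩ := (le_iff' w y).mp hy
  have hiy : pI y = pI w := by
    by_contra hne
    have hlt : pI y < pI w := lt_of_le_of_ne hle1 hne
    rcases h2 with hc | hc
    · omega
    · have hq1' : pI w - 1 + 1 = pI w := by omega
      have hV2 := steps_mono hvmono (pI y) (pI w - 1) hy1 (by omega) (by omega)
      have hV3 := hvmono (pI w - 1) (by omega) (by omega)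
      rw [hq1'] at hV3
      push_cast at hV2
      omega
  rw [ext_iff', hiy]
  rw [hiy] at hy4 hle2
  constructor
  · rfl
  · have hVm := steps_mono hvmono (pI w) (pI w) hz1 le_rfl hz2
    omega

end PLprops

section EF

variable {n : ℕ} {u v : ℕ → ℤ}

lemma exE (humono : ∀ i, 1 ≤ i → i + 1 ≤ n → u i < u (i + 1)) :
    ∀ k i : ℕ, 1 ≤ i → i ≤ n → n - i ≤ k →
      ∃ p, i ≤ p ∧ p ≤ n ∧ epsGt1 u n p ∧
        (∀ j, i ≤ j → j < p → u (j + 1) - u j = 1) ∧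
        u p - (p : ℤ) = u i - (i : ℤ) := by
  intro k
  induction k with
  | zero =>
    intro i h1 h2 h3
    have : i = n := by omega
    subst this
    exact ⟨i, le_rfl, le_rfl, Or.inl rfl, fun j hj hj' => absurd (hj.trans_lt hj') (lt_irrefl _),
      rfl⟩
  | succ k ih =>
    intro i h1 h2 h3
    by_cases hE : epsGt1 u n i
    · exact ⟨i, le_rfl, h2, hE, fun j hj hj' => absurd (hj.trans_lt hj') (lt_irrefl _), rfl⟩
    · rw [epsGt1] at hE
      push_neg at hE
      have hin : i + 1 ≤ n := by omega
      have hstep := humono i h1 hin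
      have heq : u (i + 1) - u i = 1 := by omega
      obtain ⟨p, hp1, hp2, hp3, hp4, hp5⟩ := ih (i + 1) (by omega) hin (by omega)
      refine ⟨p, by omega, hp2, hp3, ?_, by push_cast at hp5 ⊢; omega⟩
      intro j hj hj'
      rcases eq_or_lt_of_le hj with rfl | hlt
      · exact heq
      · exact hp4 j (by omega) hj'

lemma exF (hvmono : ∀ i, 1 ≤ i → i + 1 ≤ n → v i < v (i + 1)) :
    ∀ q : ℕ, 1 ≤ q → q ≤ n →
      ∃ f, 1 ≤ f ∧ f ≤ q ∧ thetaGt1 v f ∧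
        (∀ j, f ≤ j → j < q → v (j + 1) - v j = 1) ∧
        v f - (f : ℤ) = v q - (q : ℤ) := by
  intro q
  induction q with
  | zero => intro h1; omega
  | succ q ih =>
    intro h1 h2
    by_cases hF : thetaGt1 v (q + 1)
    · exact ⟨q + 1, by omega, le_rfl, hF, fun j hj hj' => absurd (hj.trans_lt hj') (lt_irrefl _),
        rfl⟩
    · rw [thetaGt1] at hF
      push_neg at hF
      have hq1 : 1 ≤ q := by omega
      have hstep := hvmono q hq1 h2
      have hsimp : q + 1 - 1 = q := rfl
      rw [hsimp] at hF
      have heq : v (q + 1) - v q = 1 := by omega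
      obtain ⟨f, hf1, hf2, hf3, hf4, hf5⟩ := ih hq1 (by omega)
      refine ⟨f, hf1, by omega, hf3, ?_, by push_cast at hf5 ⊢; omega⟩
      intro j hj hj'
      rcases eq_or_lt_of_le (Nat.lt_succ_iff.mp hj') with rfl | hlt
      · exact heq
      · exact hf4 j hj hlt

lemma EinvA (humono : ∀ i, 1 ≤ i → i + 1 ≤ n → u i < u (i + 1))
    (hA : ∀ i : ℕ, 1 ≤ i → i + 1 ≤ n → 1 < u (i + 1) - u i →
      ((i : ℤ) + (u (i + 1) - u i) - 1 ≤ (n : ℤ) ∧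
       (∀ j : ℕ, (i : ℤ) < (j : ℤ) → (j : ℤ) < (i : ℤ) + (u (i + 1) - u i) - 1 →
          u (j + 1) - u j = 1) ∧
       ((i : ℤ) + (u (i + 1) - u i) - 1 = (n : ℤ) ∨
        1 < u (((i : ℤ) + (u (i + 1) - u i) - 1).toNat + 1) -
             u (((i : ℤ) + (u (i + 1) - u i) - 1).toNat)))) :
    ∀ k p : ℕ, 1 ≤ p → p ≤ n → n - p ≤ k → epsGt1 u n p →
      2 * (p : ℤ) - u p = 2 * (n : ℤ) - u n := by
  intro k
  induction k with
  | zero =>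
    intro p h1 h2 h3 _
    have : p = n := by omega
    subst this
    rfl
  | succ k ih =>
    intro p h1 h2 h3 hE
    by_cases hp : p = n
    · subst hp; rfl
    · have hgt : 1 < u (p + 1) - u p := by
        rcases hE with h | h
        · exact absurd h hp
        · exact h
      have hpn : p + 1 ≤ n := by omega
      obtain ⟨hc1, hc2, hc3⟩ := hA p h1 hpn hgt
      set p' : ℕ := (((p : ℤ) + (u (p + 1) - u p) - 1)).toNat with hp'def
      have hp'c : (p' : ℤ) = (p : ℤ) + (u (p + 1) - u p) - 1 :=
        Int.toNat_of_nonneg (by omega)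
      have hp'n : p' ≤ n := by omega
      have hpp' : p < p' := by omega
      have hE' : epsGt1 u n p' := by
        rcases hc3 with h | h
        · exact Or.inl (by omega)
        · exact Or.inr h
      have htel : u p' - (p' : ℤ) = u (p + 1) - ((p : ℤ) + 1) := by
        have := telescope u (p + 1) p' (by omega)
          (fun j hj hj' => hc2 j (by omega) (by omega))
        push_cast at this ⊢
        omega
      have ih' := ih p' (by omega) hp'n (by omega) hE'
      omega

lemma FinvB (hvmono : ∀ i, 1 ≤ i → i + 1 ≤ n → v i < v (i + 1))
    (hB : ∀ i : ℕ, 1 ≤ i → i + 1 ≤ n → 1 < v (i + 1) - v i →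
      (0 ≤ (i : ℤ) - (v (i + 1) - v i) + 1 ∧
       (∀ j : ℕ, (i : ℤ) - (v (i + 1) - v i) + 1 < (j : ℤ) → (j : ℤ) < (i : ℤ) →
          v (j + 1) - v j = 1) ∧
       ((i : ℤ) - (v (i + 1) - v i) + 1 = 0 ∨
        1 < v (((i : ℤ) - (v (i + 1) - v i) + 1).toNat + 1) -
             v (((i : ℤ) - (v (i + 1) - v i) + 1).toNat)))) :
    ∀ q : ℕ, 1 ≤ q → q ≤ n → thetaGt1 v q →
      2 * (q : ℤ) - v q = 2 - v 1 := by
  intro q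
  induction q using Nat.strong_induction_on with
  | _ q ih =>
    intro hq1 hqn hF
    by_cases hq : q = 1
    · subst hq; push_cast; ring
    · have hgt : 1 < v q - v (q - 1) := by
        rcases hF with h | h
        · exact absurd h hq
        · exact h
      have hq2 : 2 ≤ q := by omega
      have hq1' : q - 1 + 1 = q := by omega
      obtain ⟨hc1, hc2, hc3⟩ := hB (q - 1) (by omega) (by omega) (by rw [hq1']; exact hgt)
      rw [hq1'] at hc1 hc2 hc3
      set q'' : ℕ := ((((q : ℕ) - 1 : ℕ) : ℤ) - (v q - v (q - 1)) + 1).toNat with hq''def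
      have hq''c : (q'' : ℤ) = (((q : ℕ) - 1 : ℕ) : ℤ) - (v q - v (q - 1)) + 1 :=
        Int.toNat_of_nonneg hc1
      have hcast : (((q : ℕ) - 1 : ℕ) : ℤ) = (q : ℤ) - 1 := by omega
      have hq'1 : q'' + 1 ≤ q - 1 := by omega
      have hF' : thetaGt1 v (q'' + 1) := by
        rcases hc3 with h | h
        · have : q'' = 0 := by omega
          exact Or.inl (by omega)
        · refine Or.inr ?_
          have hsimp : q'' + 1 - 1 = q'' := rfl
          rw [hsimp]
          exact h
      have htel : v (q - 1) - (((q : ℕ) - 1 : ℕ) : ℤ) = v (q'' + 1) - ((q'' : ℤ) + 1) := by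
        have := telescope v (q'' + 1) (q - 1) hq'1
          (fun j hj hj' => hc2 j (by omega) (by omega))
        push_cast at this ⊢
        omega
      have ih' := ih (q'' + 1) (by omega) (by omega) (by omega) hF'
      push_cast at ih' ⊢
      omega

end EF

section Assembly

variable {n : ℕ} {u v : ℕ → ℤ}

lemma card_of_maxChain
    (humono : ∀ i, 1 ≤ i → i + 1 ≤ n → u i < u (i + 1))
    (hvmono : ∀ i, 1 ≤ i → i + 1 ≤ n → v i < v (i + 1))
    (huv : ∀ i, 1 ≤ i → i ≤ n → u i < v i)
    (hPLne : (PL n u v).Nonempty)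
    {A : Set ↥(PL n u v)} (hA : IsMaxChain (· ≤ ·) A) :
    ∃ p q : ℕ, 1 ≤ p ∧ p ≤ n ∧ 1 ≤ q ∧ q ≤ p ∧ epsGt1 u n p ∧ thetaGt1 v q ∧
      u p + 1 - (p : ℤ) ≤ v q - (q : ℤ) ∧
      (A.ncard : ℤ) = (p : ℤ) - (q : ℤ) + (v q - (q : ℤ)) - (u p - (p : ℤ)) := by
  haveI hfin : Finite ↥(PL n u v) := (PL_finite humono hvmono).to_subtype
  haveI hnem : Nonempty ↥(PL n u v) := hPLne.to_subtype
  have hne : A.Nonempty := maxChain_nonempty hA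
  obtain ⟨z, hzA, w, hwA, hleast, hgreat, hcard⟩ :=
    maxChain_exists_card rho (fun x y h => rho_mono h)
      (insert_between humono hvmono) hA hne
  obtain ⟨hz1, hzE⟩ := min_char humono huv z (least_minimal hA hleast)
  obtain ⟨hw1, hwT⟩ := max_char hvmono huv w (greatest_maximal hA hgreat)
  obtain ⟨hzi1, hzi2, hzi3, hzi4, _⟩ := p_spec z
  obtain ⟨hwi1, hwi2, hwi3, hwi4, _⟩ := p_spec w
  have hzw := (le_iff' z w).mp (hleast w hwA)
  refine ⟨pI z, pI w, hzi1, hzi2, hwi1, hzw.1, hzE, hwT, ?_, ?_⟩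
  · rw [← hz1, ← hw1]
    exact hzw.2
  · rw [hcard]
    unfold rho
    rw [hz1, hw1]
    push_cast
    ring

lemma realize
    (humono : ∀ i, 1 ≤ i → i + 1 ≤ n → u i < u (i + 1))
    (hvmono : ∀ i, 1 ≤ i → i + 1 ≤ n → v i < v (i + 1))
    (huv : ∀ i, 1 ≤ i → i ≤ n → u i < v i)
    (p q : ℕ) (hp1 : 1 ≤ p) (hpn : p ≤ n) (hq1 : 1 ≤ q) (hqp : q ≤ p)
    (hE : epsGt1 u n p) (hF : thetaGt1 v q)
    (hcomp : u p + 1 - (p : ℤ) ≤ v q - (q : ℤ)) :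
    ∃ A : Set ↥(PL n u v), IsMaxChain (· ≤ ·) A ∧
      (A.ncard : ℤ) = (p : ℤ) - (q : ℤ) + (v q - (q : ℤ)) - (u p - (p : ℤ)) := by
  haveI hfin : Finite ↥(PL n u v) := (PL_finite humono hvmono).to_subtype
  have hqn : q ≤ n := hqp.trans hpn
  have hmemz : atuple u n p (u p + 1) ∈ PL n u v :=
    ⟨p, _, hp1, hpn, le_rfl, by have := huv p hp1 hpn; omega, rfl⟩
  have hmemw : atuple u n q (v q) ∈ PL n u v :=
    ⟨q, _, hq1, hqn, by have := huv q hq1 hqn; omega, le_rfl, rfl⟩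
  set z : ↥(PL n u v) := ⟨_, hmemz⟩ with hzdef
  set w : ↥(PL n u v) := ⟨_, hmemw⟩ with hwdef
  have hrz := rep_eq z p (u p + 1) hp1 hpn le_rfl rfl
  have hrw := rep_eq w q (v q) hq1 hqn (by have := huv q hq1 hqn; omega) rfl
  have hzw : z ≤ w := by
    rw [le_iff', hrz.1, hrz.2, hrw.1, hrw.2]
    exact ⟨hqp, hcomp⟩
  have hch : IsChain (· ≤ ·) ({z, w} : Set ↥(PL n u v)) := by
    intro a ha b hb hne
    rcases ha with rfl | ha <;> rcases hb with rfl | hb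
    · exact absurd rfl hne
    · rw [Set.mem_singleton_iff] at hb; subst hb; exact Or.inl hzw
    · rw [Set.mem_singleton_iff] at ha; subst ha; exact Or.inr hzw
    · rw [Set.mem_singleton_iff] at ha hb; subst ha; subst hb; exact absurd rfl hne
  obtain ⟨A, hA, hsub⟩ := hch.exists_maxChain
  refine ⟨A, hA, ?_⟩
  have hzmem : z ∈ A := hsub (Set.mem_insert _ _)
  have hwmem : w ∈ A := hsub (Set.mem_insert_of_mem _ rfl)
  obtain ⟨z', hz'A, w', hw'A, hleast, hgreat, hcard⟩ :=
    maxChain_exists_card rho (fun x y h => rho_mono h)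
      (insert_between humono hvmono) hA ⟨z, hzmem⟩
  have hz'z : z' = z :=
    min_of humono z (by rw [hrz.1, hrz.2]) (by rw [hrz.1]; exact hE) z' (hleast z hzmem)
  have hw'w : w' = w :=
    max_of hvmono w (by rw [hrw.1, hrw.2]) (by rw [hrw.1]; exact hF) w' (hgreat w hwmem)
  rw [hz'z, hw'w] at hcard
  rw [hcard]
  unfold rho
  rw [hrz.1, hrz.2, hrw.1, hrw.2]
  push_cast
  ring

end Assembly

theorem stmt13
    (n m : ℕ) (u v : ℕ → ℤ)
    (hn : 1 ≤ n) (hnm : n < m)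
    (hu1 : u 1 = 1)
    (humono : ∀ i, 1 ≤ i → i + 1 ≤ n → u i < u (i + 1))
    (hum : u n < (m : ℤ))
    (hv1 : 1 < v 1)
    (hvmono : ∀ i, 1 ≤ i → i + 1 ≤ n → v i < v (i + 1))
    (hvn : v n = (m : ℤ))
    (huv : ∀ i, 1 ≤ i → i ≤ n → u i < v i)
    (hstep : ∀ i, 1 ≤ i → i + 1 ≤ n → u (i + 1) ≤ v i + 1)
    (hcn : ∀ i, 1 ≤ i → i + 1 ≤ n → u (i + 1) ≤ v i) :
    IsPure ↥(PL n u v) ↔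
      ((∀ i : ℕ, 1 ≤ i → i + 1 ≤ n → 1 < u (i + 1) - u i →
          ((i : ℤ) + (u (i + 1) - u i) - 1 ≤ (n : ℤ) ∧
           (∀ j : ℕ, (i : ℤ) < (j : ℤ) → (j : ℤ) < (i : ℤ) + (u (i + 1) - u i) - 1 →
              u (j + 1) - u j = 1) ∧
           ((i : ℤ) + (u (i + 1) - u i) - 1 = (n : ℤ) ∨
            1 < u (((i : ℤ) + (u (i + 1) - u i) - 1).toNat + 1) -
                 u (((i : ℤ) + (u (i + 1) - u i) - 1).toNat)))) ∧
       (∀ i : ℕ, 1 ≤ i → i + 1 ≤ n → 1 < v (i + 1) - v i →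
          (0 ≤ (i : ℤ) - (v (i + 1) - v i) + 1 ∧
           (∀ j : ℕ, (i : ℤ) - (v (i + 1) - v i) + 1 < (j : ℤ) → (j : ℤ) < (i : ℤ) →
              v (j + 1) - v j = 1) ∧
           ((i : ℤ) - (v (i + 1) - v i) + 1 = 0 ∨
            1 < v (((i : ℤ) - (v (i + 1) - v i) + 1).toNat + 1) -
                 v (((i : ℤ) - (v (i + 1) - v i) + 1).toNat))))) := by
  constructor
  · intro hPure
    constructor
    · -- condition (a)
      intro i hi1 hin hgt
      obtain ⟨f, hf1, hf2, hf3, hf4, hf5⟩ := exF hvmono i hi1 (by omega)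
      obtain ⟨p, hp1, hp2, hp3, hp4, hp5⟩ := exE humono n (i + 1) (by omega) hin (by omega)
      have hEi : epsGt1 u n i := Or.inr hgt
      have hcomp1 : u i + 1 - (i : ℤ) ≤ v f - (f : ℤ) := by
        rw [hf5]
        have := huv i hi1 (by omega)
        omega
      have hcomp2 : u p + 1 - (p : ℤ) ≤ v f - (f : ℤ) := by
        have h1 := hcn i hi1 hin
        have h3 := hp5
        push_cast at h3 ⊢
        omega
      obtain ⟨A1, hA1, hc1⟩ := realize humono hvmono huv i f hi1 (by omega) hf1 hf2 hEi hf3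
        hcomp1
      obtain ⟨A2, hA2, hc2⟩ := realize humono hvmono huv p f (by omega) hp2 hf1 (by omega) hp3
        hf3 hcomp2
      have hcardeq := hPure A1 A2 hA1 hA2
      have hkey : (p : ℤ) = (i : ℤ) + (u (i + 1) - u i) - 1 := by
        rw [hcardeq] at hc1
        push_cast at hc1 hc2 hp5
        omega
      refine ⟨by omega, ?_, ?_⟩
      · intro j hj1 hj2
        exact hp4 j (by omega) (by omega)
      · have htn : ((i : ℤ) + (u (i + 1) - u i) - 1).toNat = p := by omega
        rw [htn]
        rcases hp3 with h | h
        · left; omega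
        · right; exact h
    · -- condition (b)
      intro i hi1 hin hgt
      have hFq : thetaGt1 v (i + 1) := by
        refine Or.inr ?_
        have hs : i + 1 - 1 = i := rfl
        rw [hs]
        exact hgt
      obtain ⟨f, hf1, hf2, hf3, hf4, hf5⟩ := exF hvmono i hi1 (by omega)
      obtain ⟨p, hp1, hp2, hp3, hp4, hp5⟩ := exE humono n (i + 1) (by omega) hin (by omega)
      have hcomp1 : u p + 1 - (p : ℤ) ≤ v (i + 1) - ((i + 1 : ℕ) : ℤ) := by
        have h1 := hcn i hi1 hin
        have h2 := hvmono i hi1 hin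
        have h3 := hp5
        push_cast at h3 ⊢
        omega
      have hcomp2 : u p + 1 - (p : ℤ) ≤ v f - (f : ℤ) := by
        have h1 := hcn i hi1 hin
        have h3 := hp5
        have h4 := hf5
        push_cast at h3 ⊢
        omega
      obtain ⟨A1, hA1, hc1⟩ := realize humono hvmono huv p (i + 1) (by omega) hp2 (by omega)
        hp1 hp3 hFq hcomp1
      obtain ⟨A2, hA2, hc2⟩ := realize humono hvmono huv p f (by omega) hp2 hf1 (by omega) hp3
        hf3 hcomp2
      have hcardeq := hPure A1 A2 hA1 hA2
      have hkey : (f : ℤ) = (i : ℤ) - (v (i + 1) - v i) + 2 := by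
        rw [hcardeq] at hc1
        push_cast at hc1 hc2 hf5
        omega
      refine ⟨by omega, ?_, ?_⟩
      · intro j hj1 hj2
        exact hf4 j (by omega) (by omega)
      · have htn : ((i : ℤ) - (v (i + 1) - v i) + 1).toNat = f - 1 := by omega
        rw [htn]
        rcases hf3 with h | h
        · left; omega
        · right
          have hs : f - 1 + 1 = f := by omega
          rw [hs]
          exact h
  · rintro ⟨ha, hb⟩
    intro A B hA hB
    have hPLne : (PL n u v).Nonempty :=
      ⟨atuple u n 1 (u 1 + 1), 1, u 1 + 1, le_rfl, hn, le_rfl, by omega, rfl⟩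
    obtain ⟨p, q, hp1, hp2, hq1, hq2, hE, hF, hcomp, hcard⟩ :=
      card_of_maxChain humono hvmono huv hPLne hA
    obtain ⟨p', q', hp1', hp2', hq1', hq2', hE', hF', hcomp', hcard'⟩ :=
      card_of_maxChain humono hvmono huv hPLne hB
    have e1 := EinvA humono ha n p hp1 hp2 (by omega) hE
    have e2 := EinvA humono ha n p' hp1' hp2' (by omega) hE'
    have f1 := FinvB hvmono hb q hq1 (hq2.trans hp2) hF
    have f2 := FinvB hvmono hb q' hq1' (hq2'.trans hp2') hF'
    have : (A.ncard : ℤ) = (B.ncard : ℤ) := by omega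
    exact_mod_cast this

end LadderPaper
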